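/- (Theorem 2 applied to coefficient estimates.) Let γ > 0, let x, x₁, …, x_N ∈ ℝ² (N ≥ 1), let w₀, w₁, …, w_N be real numbers such that for all i, j, if ‖xᵢ − x‖ ≤ ‖xⱼ − x‖ then |wᵢ − w₀| ≤ |wⱼ − w₀|, and set kᵢ = exp(−‖xᵢ − x‖²/(2γ)). Then the kernel-estimated coefficient satisfies |(Σᵢ kᵢ wᵢ)/(Σᵢ kᵢ) − w₀| ≤ (1/N)·Σᵢ |wᵢ − w₀|; in particular the kernel estimation error is bounded by the mean absolute deviation of the adjacent coefficient values from the true coefficient w₀. -/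

import Mathlib

/-- Theorem 2 applied to coefficient estimates: the Gaussian-kernel estimated
coefficient deviates from the true coefficient `w₀` by at most the mean
absolute deviation of the adjacent fitted coefficients from `w₀`. -/
theorem kernel_estimated_coefficient_error_le_mean_absolute_deviation
    (γ : ℝ) (hγ : 0 < γ) (N : ℕ) (hN : 1 ≤ N)
    (x : EuclideanSpace ℝ (Fin 2)) (xs : Fin N → EuclideanSpace ℝ (Fin 2))
    (w₀ : ℝ) (w : Fin N → ℝ)
    (hmono : ∀ i j, ‖xs i - x‖ ≤ ‖xs j - x‖ → |w i - w₀| ≤ |w j - w₀|) :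
    |(∑ i, Real.exp (-‖xs i - x‖ ^ 2 / (2 * γ)) * w i) /
        (∑ i, Real.exp (-‖xs i - x‖ ^ 2 / (2 * γ))) - w₀|
      ≤ (1 / (N : ℝ)) * ∑ i, |w i - w₀| := by
  set k : Fin N → ℝ := fun i => Real.exp (-‖xs i - x‖ ^ 2 / (2 * γ)) with hk
  have hkpos : ∀ i, 0 < k i := fun i => Real.exp_pos _
  have hSpos : 0 < ∑ i, k i :=
    Finset.sum_pos (fun i _ => hkpos i) ⟨⟨0, by omega⟩, Finset.mem_univ _⟩
  have hanti : Antivary k (fun i => |w i - w₀|) := by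
    intro i j hij
    dsimp only at hij
    have hd : ‖xs i - x‖ < ‖xs j - x‖ := by
      by_contra h
      exact absurd (hmono j i (le_of_not_gt h)) (not_le.2 hij)
    have : -‖xs j - x‖ ^ 2 / (2 * γ) ≤ -‖xs i - x‖ ^ 2 / (2 * γ) := by
      apply div_le_div_of_nonneg_right ?_ (by linarith) |>.trans_eq rfl
      · nlinarith [norm_nonneg (xs i - x), norm_nonneg (xs j - x)]
    exact Real.exp_le_exp.2 this
  -- rewrite estimate error
  have key : |(∑ i, k i * w i) / (∑ i, k i) - w₀| ≤ (∑ i, k i * |w i - w₀|) / (∑ i, k i) := by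
    rw [div_sub' (ne_of_gt hSpos), abs_div, abs_of_pos hSpos]
    gcongr
    calc |∑ i, k i * w i - (∑ i, k i) * w₀|
        = |∑ i, k i * (w i - w₀)| := by
          rw [Finset.sum_mul]
          congr 1
          rw [← Finset.sum_sub_distrib]
          exact Finset.sum_congr rfl (fun i _ => by ring)
      _ ≤ ∑ i, |k i * (w i - w₀)| := Finset.abs_sum_le_sum_abs _ _
      _ = ∑ i, k i * |w i - w₀| := by
          exact Finset.sum_congr rfl fun i _ => by
            rw [abs_mul, abs_of_pos (hkpos i)]
  have cheb : (N : ℝ) * ∑ i, k i * |w i - w₀| ≤ (∑ i, k i) * ∑ i, |w i - w₀| := by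
    have := hanti.card_mul_sum_le_sum_mul_sum
    simpa using this
  have hNpos : (0 : ℝ) < N := by exact_mod_cast hN
  refine key.trans ?_
  rw [div_le_iff₀ hSpos]
  calc ∑ i, k i * |w i - w₀|
      = (1 / (N : ℝ)) * ((N : ℝ) * ∑ i, k i * |w i - w₀|) := by
        field_simp
    _ ≤ (1 / (N : ℝ)) * ((∑ i, k i) * ∑ i, |w i - w₀|) := by
        apply mul_le_mul_of_nonneg_left cheb (by positivity)
    _ = (1 / (N : ℝ) * ∑ i, |w i - w₀|) * ∑ i, k i := by ring
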